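/- Suppose the connection structure is strongly connected: for every pair of distinct indices i, j ∈ {1,…,n}, agent i reaches agent j through B. Then every entry of λ := (I − B)^{-1}·C is strictly positive: λ_{ij} > 0 for all i, j ∈ {1,…,n}. Consequently, the unique solution of (I−B)p_g = C·P_data gives each agent a generator distribution p*_{g_i} = Σ_j λ_{ij}·p_data_j that places strictly positive weight on every agent's data distribution. -/

import Mathlib

/-- Agent `i` reaches agent `j` through `B`: either `i = j`, or there is a path
`k_0 = i, k_1, …, k_m = j` (with `m ≥ 1`) along which all the weights
`B (k_t) (k_{t+1}) = π_{k_t k_{t+1}}` are strictly positive. -/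
def Reaches {n : ℕ} (B : Matrix (Fin n) (Fin n) ℝ) (i j : Fin n) : Prop :=
  i = j ∨ ∃ m : ℕ, 1 ≤ m ∧ ∃ k : Fin (m + 1) → Fin n, k 0 = i ∧ k (Fin.last m) = j ∧
    ∀ t : Fin m, 0 < B (k t.castSucc) (k t.succ)

attribute [local instance] Matrix.linftyOpNormedRing Matrix.linftyOpNormedAlgebra

/-- Entries of powers of an entrywise-nonnegative matrix are nonnegative. -/
lemma pow_entry_nonneg {n : ℕ} {B : Matrix (Fin n) (Fin n) ℝ}
    (hB : ∀ i j, 0 ≤ B i j) : ∀ m i j, 0 ≤ (B ^ m) i j := by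
  intro m
  induction m with
  | zero =>
    intro i j
    simp only [pow_zero]
    by_cases h : i = j <;> simp [Matrix.one_apply, h]
  | succ m ih =>
    intro i j
    rw [pow_succ, Matrix.mul_apply]
    exact Finset.sum_nonneg fun c _ => mul_nonneg (ih i c) (hB c j)

/-- Along a positive path of length `m`, the `m`-th power has a positive entry. -/
lemma path_pow_pos {n : ℕ} {B : Matrix (Fin n) (Fin n) ℝ}
    (hB : ∀ i j, 0 ≤ B i j) :
    ∀ m (k : Fin (m + 1) → Fin n),
      (∀ t : Fin m, 0 < B (k t.castSucc) (k t.succ)) →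
      0 < (B ^ m) (k 0) (k (Fin.last m)) := by
  intro m
  induction m with
  | zero =>
    intro k _
    simp [Matrix.one_apply]
  | succ m ih =>
    intro k hk
    have h0 : 0 < B (k 0) (k 1) := by
      have := hk 0
      simpa using this
    have hrest : 0 < (B ^ m) (k 1) (k (Fin.last (m + 1))) := by
      have := ih (fun t => k t.succ) (fun t => by
        have := hk t.succ
        exact this)
      simpa [Fin.succ_last] using this
    rw [pow_succ', Matrix.mul_apply]
    have hterm : 0 < B (k 0) (k 1) * (B ^ m) (k 1) (k (Fin.last (m + 1))) :=
      mul_pos h0 hrest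
    refine Finset.sum_pos' (fun c _ => mul_nonneg (hB _ _) (pow_entry_nonneg hB _ _ _)) ?_
    exact ⟨k 1, Finset.mem_univ _, hterm⟩

theorem lambda_pos_of_strongly_connected (n : ℕ) (hn : 0 < n)
    (B : Matrix (Fin n) (Fin n) ℝ) (hB : ∀ i j, 0 ≤ B i j)
    (hrow : ∀ i, ∑ j, B i j < 1)
    (hsc : ∀ i j : Fin n, i ≠ j → Reaches B i j) :
    ∀ i j, 0 < ((1 - B)⁻¹ * Matrix.diagonal (fun i => 1 - ∑ j, B i j)) i j := by
  haveI : CompleteSpace (Matrix (Fin n) (Fin n) ℝ) := FiniteDimensional.complete ℝ _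
  -- the ℓ∞ operator norm of B is < 1
  have hnorm : ‖B‖ < 1 := by
    rw [Matrix.linfty_opNorm_def]
    have : (Finset.univ.sup fun i : Fin n => ∑ j, ‖B i j‖₊) < 1 := by
      rw [Finset.sup_lt_iff (by norm_num : (⊥ : NNReal) < 1)]
      intro i _
      have : ((∑ j, ‖B i j‖₊ : NNReal) : ℝ) < 1 := by
        push_cast
        calc ∑ j, (‖B i j‖₊ : ℝ) = ∑ j, B i j := by
              refine Finset.sum_congr rfl fun j _ => ?_
              rw [coe_nnnorm, Real.norm_eq_abs, abs_of_nonneg (hB i j)]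
          _ < 1 := hrow i
      exact_mod_cast this
    exact_mod_cast this
  -- the inverse is the geometric series
  have hgeo : HasSum (fun k : ℕ => B ^ k) ((1 - B)⁻¹) := by
    rw [Matrix.nonsing_inv_eq_ringInverse]
    exact hasSum_geom_series_inverse B hnorm
  intro i j
  -- entrywise sum
  have hentry : HasSum (fun k : ℕ => (B ^ k) i j) ((1 - B)⁻¹ i j) := by
    let e : Matrix (Fin n) (Fin n) ℝ →ₗ[ℝ] ℝ :=
      { toFun := fun A => A i j
        map_add' := fun _ _ => rfl
        map_smul' := fun _ _ => rfl }
    have hce : Continuous e := by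
      refine AddMonoidHomClass.continuous_of_bound e 1 fun A => ?_
      rw [one_mul, Matrix.linfty_opNorm_def]
      have h1 : ‖A i j‖ ≤ ∑ j', ‖A i j'‖ :=
        Finset.single_le_sum (f := fun j' => ‖A i j'‖)
          (fun _ _ => norm_nonneg _) (Finset.mem_univ j)
      have h2 : ((∑ j', ‖A i j'‖₊ : NNReal) : ℝ) ≤
          ((Finset.univ.sup fun i' : Fin n => ∑ j', ‖A i' j'‖₊ : NNReal) : ℝ) := by
        exact_mod_cast Finset.le_sup (f := fun i' : Fin n => ∑ j', ‖A i' j'‖₊)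
          (Finset.mem_univ i)
      calc ‖(e A : ℝ)‖ ≤ ∑ j', ‖A i j'‖ := h1
        _ = ((∑ j', ‖A i j'‖₊ : NNReal) : ℝ) := by push_cast [coe_nnnorm]; rfl
        _ ≤ _ := h2
    exact hgeo.map e hce
  -- some power has a positive (i,j) entry
  have hpos : ∃ m : ℕ, 0 < (B ^ m) i j := by
    by_cases hij : i = j
    · exact ⟨0, by simp [hij, Matrix.one_apply]⟩
    · rcases hsc i j hij with h | ⟨m, _, k, hk0, hkl, hkp⟩
      · exact absurd h hij
      · exact ⟨m, hk0 ▸ hkl ▸ path_pow_pos hB m k hkp⟩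
  rcases hpos with ⟨m, hm⟩
  have hinv : 0 < (1 - B)⁻¹ i j := by
    rw [← hentry.tsum_eq]
    exact Summable.tsum_pos hentry.summable (fun k => pow_entry_nonneg hB k i j) m hm
  rw [Matrix.mul_diagonal]
  exact mul_pos hinv (sub_pos.mpr (hrow j))
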